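/- Radial mollification of the Cauchy kernel: let ρ : [0,∞) → [0,∞) be a bounded measurable function with compact support. Then for every z ∈ ℂ with z ≠ 0, the integral ∫_ℂ ρ(|w|)/(z − w) dw (with respect to Lebesgue measure on ℂ ≅ ℝ²) converges absolutely and equals (2π/z) · ∫₀^{|z|} ρ(r) r dr. -/

import Mathlib

open MeasureTheory Set Real Metric


theorem my_integrableOn_comp_polarCoord_symm {E : Type*} [NormedAddCommGroup E]
    [NormedSpace ℝ E] (f : ℝ × ℝ → E) :
    IntegrableOn (fun p : ℝ × ℝ => p.1 • f (polarCoord.symm p)) polarCoord.target ↔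
      Integrable f := by
  set B : ℝ × ℝ → ℝ × ℝ →L[ℝ] ℝ × ℝ := fun p =>
    LinearMap.toContinuousLinearMap (Matrix.toLin (Module.Basis.finTwoProd ℝ) (Module.Basis.finTwoProd ℝ)
      !![cos p.2, -p.1 * sin p.2; sin p.2, p.1 * cos p.2])
  have A : ∀ p ∈ polarCoord.target, HasFDerivWithinAt polarCoord.symm (B p) polarCoord.target p :=
    fun p _ => (hasFDerivAt_polarCoord_symm p).hasFDerivWithinAt
  have B_det : ∀ p, (B p).det = p.1 := by
    intro p
    conv_rhs => rw [← one_mul p.1, ← cos_sq_add_sin_sq p.2]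
    simp only [B, neg_mul, LinearMap.det_toContinuousLinearMap, LinearMap.det_toLin,
      Matrix.det_fin_two_of, sub_neg_eq_add]
    ring
  constructor
  · intro h
    rw [← integrableOn_univ]
    have h2 : IntegrableOn f (polarCoord.symm '' polarCoord.target) := by
      rw [integrableOn_image_iff_integrableOn_abs_det_fderiv_smul volume
        polarCoord.open_target.measurableSet A polarCoord.symm.injOn f]
      refine h.congr_fun (fun p hp => ?_) polarCoord.open_target.measurableSet
      rw [B_det, abs_of_pos hp.1]
    rw [polarCoord.symm_image_target_eq_source] at h2
    exact h2.congr_set_ae polarCoord_source_ae_eq_univ.symm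
  · intro h
    have h2 : IntegrableOn f (polarCoord.symm '' polarCoord.target) := by
      rw [polarCoord.symm_image_target_eq_source]; exact h.integrableOn
    rw [integrableOn_image_iff_integrableOn_abs_det_fderiv_smul volume
      polarCoord.open_target.measurableSet A polarCoord.symm.injOn f] at h2
    refine h2.congr_fun (fun p hp => ?_) polarCoord.open_target.measurableSet
    beta_reduce
    rw [B_det, abs_of_pos hp.1]

theorem my_complex_integrableOn_comp_polarCoord_symm (f : ℂ → ℂ) :
    IntegrableOn (fun p : ℝ × ℝ => p.1 • f (Complex.polarCoord.symm p)) polarCoord.target ↔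
      Integrable f := by
  rw [← (Complex.volume_preserving_equiv_real_prod.symm).integrable_comp_emb
    Complex.measurableEquivRealProd.symm.measurableEmbedding,
    ← my_integrableOn_comp_polarCoord_symm]
  rfl

open MeasureTheory Set Real Metric

theorem my_circle_eval {z : ℂ} (hz : z ≠ 0) {r : ℝ} (hr : 0 < r) (hne : r ≠ ‖z‖) :
    ∫ θ in (0:ℝ)..(2*π), (z - circleMap 0 r θ)⁻¹
      = if r < ‖z‖ then 2*π/z else 0 := by
  have hw0 : ∀ θ, circleMap 0 r θ ≠ 0 := fun θ => circleMap_ne_center hr.ne'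
  have hwz : ∀ θ, z - circleMap 0 r θ ≠ 0 := by
    intro θ h
    rw [sub_eq_zero] at h
    apply hne
    rw [h, norm_circleMap_zero, abs_of_pos hr]
  have h1 : (∮ w in C(0, r), w⁻¹) = 2*π*Complex.I := by
    have := circleIntegral.integral_sub_inv_of_mem_ball
      (show (0:ℂ) ∈ ball (0:ℂ) r by simpa using hr)
    simpa using this
  have h2 : (∮ w in C(0, r), (z - w)⁻¹) = if r < ‖z‖ then 0 else -(2*π*Complex.I) := by
    rcases hne.lt_or_gt with hlt | hgt
    · rw [if_pos hlt]
      apply Complex.circleIntegral_eq_zero_of_differentiable_on_off_countable hr.le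
        Set.countable_empty
      · apply ContinuousOn.inv₀ (continuous_const.sub continuous_id).continuousOn
        intro w hw h
        rw [Pi.sub_apply, sub_eq_zero] at h
        simp only [id_eq] at h
        subst h
        simp only [mem_closedBall, dist_zero_right ] at hw
        exact absurd (hlt.trans_le hw) (lt_irrefl _)
      · intro w hw
        apply DifferentiableAt.inv ((differentiable_const z).differentiableAt.sub
          differentiable_id.differentiableAt)
        intro h
        rw [Pi.sub_apply, sub_eq_zero] at h
        simp only [id_eq] at h
        subst h
        simp only [mem_diff, mem_ball, dist_zero_right ] at hw
        exact absurd (hlt.trans hw.1) (lt_irrefl _)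
    · rw [if_neg (not_lt.2 hgt.le)]
      have hzball : z ∈ ball (0:ℂ) r := by
        simpa using hgt
      have := circleIntegral.integral_sub_inv_of_mem_ball hzball
      rw [← this]
      have heq : ∀ w : ℂ, (z - w)⁻¹ = -((w - z)⁻¹) := by
        intro w; rw [← inv_neg, neg_sub]
      simp_rw [heq]
      simp only [circleIntegral, smul_neg, intervalIntegral.integral_neg]
  -- relate interval integral to circle integrals
  have key : ∀ θ : ℝ, (z - circleMap 0 r θ)⁻¹
      = (-Complex.I/z) * ((circleMap 0 r θ * Complex.I) *
          ((circleMap 0 r θ)⁻¹ + (z - circleMap 0 r θ)⁻¹)) := by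
    intro θ
    have h0 := hw0 θ
    have h1 := hwz θ
    field_simp
    simp only [Complex.I_sq]; ring
  have hc1 : IntervalIntegrable (fun θ => (circleMap 0 r θ * Complex.I) * (circleMap 0 r θ)⁻¹)
      volume 0 (2*π) := by
    apply Continuous.intervalIntegrable
    exact ((continuous_circleMap 0 r).mul continuous_const).mul
      ((continuous_circleMap 0 r).inv₀ hw0)
  have hc2 : IntervalIntegrable (fun θ => (circleMap 0 r θ * Complex.I) * (z - circleMap 0 r θ)⁻¹)
      volume 0 (2*π) := by
    apply Continuous.intervalIntegrable
    exact ((continuous_circleMap 0 r).mul continuous_const).mul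
      ((continuous_const.sub (continuous_circleMap 0 r)).inv₀ hwz)
  calc ∫ θ in (0:ℝ)..(2*π), (z - circleMap 0 r θ)⁻¹
      = ∫ θ in (0:ℝ)..(2*π), (-Complex.I/z) * ((circleMap 0 r θ * Complex.I) *
          ((circleMap 0 r θ)⁻¹ + (z - circleMap 0 r θ)⁻¹)) := by
        simp_rw [← key]
    _ = (-Complex.I/z) * ∫ θ in (0:ℝ)..(2*π), ((circleMap 0 r θ * Complex.I) *
          ((circleMap 0 r θ)⁻¹ + (z - circleMap 0 r θ)⁻¹)) := by
        rw [intervalIntegral.integral_const_mul]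
    _ = (-Complex.I/z) * ((∮ w in C(0, r), w⁻¹) + (∮ w in C(0, r), (z - w)⁻¹)) := by
        congr 1
        simp_rw [mul_add]
        rw [intervalIntegral.integral_add hc1 hc2]
        simp [circleIntegral, deriv_circleMap, smul_eq_mul]
    _ = if r < ‖z‖ then 2*π/z else 0 := by
        rw [h1, h2]
        rcases hne.lt_or_gt with hlt | hgt
        · rw [if_pos hlt, if_pos hlt]
          rw [add_zero]
          field_simp
          simp only [Complex.I_sq]; ring
        · rw [if_neg (not_lt.2 hgt.le), if_neg (not_lt.2 hgt.le)]
          simp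

theorem my_inner {z : ℂ} (hz : z ≠ 0) {r : ℝ} (hr : 0 < r) (hne : r ≠ ‖z‖) :
    ∫ θ in Ioo (-π) π, (z - Complex.polarCoord.symm (r, θ))⁻¹
      = if r < ‖z‖ then 2*π/z else 0 := by
  have hsy : ∀ θ : ℝ, Complex.polarCoord.symm (r, θ) = circleMap 0 r θ := by
    intro θ
    simp [Complex.polarCoord_symm_apply, circleMap, Complex.exp_mul_I,
      Complex.ofReal_cos, Complex.ofReal_sin]
  simp_rw [hsy]
  have hper : Function.Periodic (fun θ => (z - circleMap 0 r θ)⁻¹) (2*π) := by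
    intro θ
    simp [periodic_circleMap 0 r θ]
  have h1 : ∫ θ in Ioo (-π) π, (z - circleMap 0 r θ)⁻¹
      = ∫ θ in (-π)..π, (z - circleMap 0 r θ)⁻¹ := by
    rw [intervalIntegral.integral_of_le (by linarith [pi_pos]), integral_Ioc_eq_integral_Ioo]
  have h2 : ∫ θ in (-π)..π, (z - circleMap 0 r θ)⁻¹
      = ∫ θ in (0:ℝ)..(2*π), (z - circleMap 0 r θ)⁻¹ := by
    have := hper.intervalIntegral_add_eq (-π) 0
    rw [show -π + 2*π = π by ring, zero_add] at this
    exact this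
  rw [h1, h2, my_circle_eval hz hr hne]

/-- Radial mollification of the Cauchy kernel: for `ρ : [0,∞) → [0,∞)` bounded,
measurable, with compact support, and any `z ≠ 0`, the integral
`∫_ℂ ρ(|w|)/(z - w) dw` converges absolutely and equals `(2π/z) ∫₀^{|z|} ρ(r) r dr`. -/
theorem radial_mollification_cauchy_kernel (ρ : ℝ → ℝ) (hmeas : Measurable ρ)
    (hnonneg : ∀ r, 0 ≤ ρ r) (hbdd : ∃ C, ∀ r, ρ r ≤ C) (hsupp : HasCompactSupport ρ)
    (z : ℂ) (hz : z ≠ 0) :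
    Integrable (fun w : ℂ => (ρ (‖w‖) : ℂ) / (z - w)) ∧
      ∫ w : ℂ, (ρ (‖w‖) : ℂ) / (z - w)
        = ((2 * Real.pi : ℝ) : ℂ) / z *
            ((∫ r in (0:ℝ)..(‖z‖), ρ r * r : ℝ) : ℂ) := by
  obtain ⟨C, hC⟩ := hbdd
  have hC0 : 0 ≤ C := (hnonneg 0).trans (hC 0)
  obtain ⟨R, hR0, hRsupp⟩ := hsupp.exists_pos_le_norm
  have htarget : polarCoord.target = Ioi (0:ℝ) ×ˢ Ioo (-π) π := rfl
  set f : ℂ → ℂ := fun w => (ρ (‖w‖) : ℂ) / (z - w) with hfdef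
  have hsymm_cont : Continuous (fun p : ℝ × ℝ => Complex.polarCoord.symm p) := by
    have : (fun p : ℝ × ℝ => Complex.polarCoord.symm p)
        = fun p : ℝ × ℝ => (p.1 : ℂ) * (Real.cos p.2 + Real.sin p.2 * Complex.I) := by
      funext p; rw [Complex.polarCoord_symm_apply]
    rw [this]
    fun_prop
  have hfmeas : Measurable f := by
    apply Measurable.div
    · exact Complex.measurable_ofReal.comp (hmeas.comp continuous_norm.measurable)
    · exact measurable_const.sub measurable_id
  -- Integrability
  have key : Integrable (fun w => f (w + z)) := by
    rw [← my_complex_integrableOn_comp_polarCoord_symm]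
    set S : Set (ℝ × ℝ) := Ioc 0 (R + ‖z‖) ×ˢ Ioo (-π) π with hSdef
    have hSmeas : MeasurableSet S := measurableSet_Ioc.prod measurableSet_Ioo
    have hSfin : volume S < ⊤ := by
      rw [hSdef, Measure.volume_eq_prod, Measure.prod_prod, Real.volume_Ioc, Real.volume_Ioo]
      exact ENNReal.mul_lt_top ENNReal.ofReal_lt_top ENNReal.ofReal_lt_top
    apply Integrable.mono' (g := S.indicator (fun _ => C))
    · exact ((integrable_indicator_iff hSmeas).2
        (integrableOn_const hSfin.ne)).integrableOn
    · apply Measurable.aestronglyMeasurable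
      exact measurable_fst.smul
        (hfmeas.comp (hsymm_cont.measurable.add_const z))
    · rw [ae_restrict_iff' polarCoord.open_target.measurableSet]
      apply Filter.Eventually.of_forall
      intro p hp
      rw [htarget] at hp
      obtain ⟨hp1, hp2⟩ := hp
      simp only [mem_Ioi] at hp1
      have habs : ‖Complex.polarCoord.symm p‖ = p.1 := by
        rw [Complex.norm_polarCoord_symm, abs_of_pos hp1]
      have hzsub : z - (Complex.polarCoord.symm p + z) = -(Complex.polarCoord.symm p) := by ring
      have hnorm : ‖p.1 • f (Complex.polarCoord.symm p + z)‖
          = ρ (‖Complex.polarCoord.symm p + z‖) := by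
        rw [hfdef]
        simp only [norm_smul, Real.norm_eq_abs, abs_of_pos hp1]
        rw [hzsub, norm_div, Complex.norm_real, Real.norm_eq_abs,
          norm_neg, habs, abs_of_nonneg (hnonneg _)]
        field_simp
      rw [hnorm]
      by_cases hle : p.1 ≤ R + ‖z‖
      · have hpS : p ∈ S := ⟨⟨hp1, hle⟩, hp2⟩
        rw [indicator_of_mem hpS]
        exact hC _
      · have hbig : R ≤ ‖Complex.polarCoord.symm p + z‖ := by
          have h2 : ‖Complex.polarCoord.symm p‖
              ≤ ‖Complex.polarCoord.symm p + z‖ + ‖z‖ := by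
            simpa using norm_add_le (Complex.polarCoord.symm p + z) (-z)
          rw [habs] at h2
          linarith
        have : ρ (‖Complex.polarCoord.symm p + z‖) = 0 := by
          apply hRsupp
          rw [Real.norm_eq_abs, abs_of_nonneg (norm_nonneg _)]
          exact hbig
        rw [this]
        exact indicator_nonneg (fun _ _ => hC0) p
  have hint : Integrable f := by
    have h2 := key.comp_add_right (-z)
    simpa using h2
  refine ⟨hint, ?_⟩
  -- Computation
  rw [show (∫ w : ℂ, (ρ (‖w‖) : ℂ) / (z - w)) = ∫ w, f w from rfl,
    ← Complex.integral_comp_polarCoord_symm f]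
  have hIntPolar : IntegrableOn (fun p : ℝ × ℝ => p.1 • f (Complex.polarCoord.symm p))
      polarCoord.target := (my_complex_integrableOn_comp_polarCoord_symm f).2 hint
  rw [htarget] at hIntPolar ⊢
  rw [Measure.volume_eq_prod] at hIntPolar ⊢
  rw [setIntegral_prod _ hIntPolar]
  have h1 : ∀ᵐ r : ℝ ∂volume, r ≠ ‖z‖ := by
    refine ae_iff.2 ?_
    simp only [ne_eq, not_not, setOf_eq_eq_singleton]
    exact measure_singleton _
  have hae : ∀ᵐ r ∂(volume.restrict (Ioi (0:ℝ))),
      (∫ θ in Ioo (-π) π, ((r, θ).1 • f (Complex.polarCoord.symm (r, θ)) : ℂ))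
        = (Ioo (0:ℝ) (‖z‖)).indicator
            (fun r => ((2 * π : ℝ) : ℂ)/z * ((ρ r * r : ℝ) : ℂ)) r := by
    filter_upwards [ae_restrict_mem measurableSet_Ioi, ae_restrict_of_ae h1] with r hr hne
    simp only [mem_Ioi] at hr
    have habs : ∀ θ : ℝ, ‖Complex.polarCoord.symm (r, θ)‖ = r := by
      intro θ
      rw [Complex.norm_polarCoord_symm]
      exact abs_of_pos hr
    have hrw : ∀ θ : ℝ, ((r, θ).1 • f (Complex.polarCoord.symm (r, θ)) : ℂ)
        = ((ρ r * r : ℝ) : ℂ) * (z - Complex.polarCoord.symm (r, θ))⁻¹ := by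
      intro θ
      rw [hfdef]
      simp only [habs θ]
      rw [div_eq_mul_inv, Complex.real_smul]
      push_cast
      ring
    simp_rw [hrw]
    rw [integral_const_mul, my_inner hz hr hne]
    by_cases hlt : r < ‖z‖
    · rw [if_pos hlt, indicator_of_mem (show r ∈ Ioo 0 (‖z‖) from ⟨hr, hlt⟩)]
      push_cast
      ring
    · rw [if_neg hlt, indicator_of_notMem (fun h => hlt h.2), mul_zero]
  have hco : ∫ a in Ioo (0:ℝ) (‖z‖), ((ρ a * a : ℝ) : ℂ)
      = ((∫ a in Ioo (0:ℝ) (‖z‖), ρ a * a : ℝ) : ℂ) := integral_ofReal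
  rw [integral_congr_ae hae, setIntegral_indicator measurableSet_Ioo,
    inter_eq_self_of_subset_right Ioo_subset_Ioi_self,
    integral_const_mul, hco,
    intervalIntegral.integral_of_le (norm_nonneg z), integral_Ioc_eq_integral_Ioo]
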